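/- Let ψ ∈ ℝ and let f : [0,∞) → ℝ be continuous with f(t) → ψ as t → ∞. Then liminf_{T→∞} ( inf_{t ∈ (0,T]} (1/t)·∫_{T-t}^{T} f(s) ds ) ≥ ψ. -/

import Mathlib

open MeasureTheory Filter

/-- Deterministic analysis lemma (continuous-time analogue of Lemma 7.7 of Pap–Szabó 2013)
used for the CIR change-point estimator: if `f : [0,∞) → ℝ` is continuous with
`f(t) → ψ` as `t → ∞`, then `liminf_{T→∞} inf_{t ∈ (0,T]} (1/t)·∫_{T−t}^T f(s) ds ≥ ψ`
(formulated as: for every `ε > 0`, eventually in `T`, the backward averages are all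
at least `ψ − ε`). -/
theorem liminf_backward_averages_ge
    (ψ : ℝ) (f : ℝ → ℝ)
    (hf_cont : ContinuousOn f (Set.Ici (0 : ℝ)))
    (hf_lim : Tendsto f atTop (nhds ψ)) :
    ∀ ε > 0, ∃ T₀ : ℝ, ∀ T ≥ T₀, ∀ t ∈ Set.Ioc (0 : ℝ) T,
      ψ - ε ≤ (1 / t) * ∫ s in (T - t)..T, f s := by
  intro ε hε
  obtain ⟨M, hM⟩ := eventually_atTop.mp
    (hf_lim.eventually (eventually_gt_nhds (by linarith : ψ - ε/2 < ψ)))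
  set M' := max M 0 with hM'def
  have hM'0 : (0:ℝ) ≤ M' := le_max_right _ _
  obtain ⟨x₀, hx₀, hmin⟩ := (isCompact_Icc : IsCompact (Set.Icc (0:ℝ) M')).exists_isMinOn
    ⟨0, by simp [hM'0]⟩ (hf_cont.mono (fun y hy => hy.1))
  set L := min (f x₀) (ψ - ε/2) with hL
  have hfL : ∀ s, 0 ≤ s → L ≤ f s := by
    intro s hs
    rcases le_or_gt s M' with h | h
    · exact le_trans (min_le_left _ _) (hmin ⟨hs, h⟩)
    · exact le_trans (min_le_right _ _)
        (le_of_lt (hM s (le_of_lt (lt_of_le_of_lt (le_max_left _ _) h))))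
  have hLψ : L ≤ ψ - ε/2 := min_le_right _ _
  set K := ψ - ε/2 - L with hK
  have hK0 : 0 ≤ K := by simp [hK]; linarith
  -- key integral lower bound
  have key : ∀ a b : ℝ, 0 ≤ a → a ≤ b → ∀ c : ℝ,
      (∀ s ∈ Set.Icc a b, c ≤ f s) → (b - a) * c ≤ ∫ s in a..b, f s := by
    intro a b ha hab c hc
    have hsub : Set.uIcc a b ⊆ Set.Ici (0:ℝ) := by
      rw [Set.uIcc_of_le hab]; exact fun y hy => le_trans ha hy.1
    have hint : IntervalIntegrable f volume a b := (hf_cont.mono hsub).intervalIntegrable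
    calc (b - a) * c = ∫ _ in a..b, c := by rw [intervalIntegral.integral_const, smul_eq_mul]
      _ ≤ _ := intervalIntegral.integral_mono_on hab intervalIntegrable_const hint hc
  have hintOn : ∀ a b : ℝ, 0 ≤ a → 0 ≤ b → IntervalIntegrable f volume a b := by
    intro a b ha hb
    refine (hf_cont.mono ?_).intervalIntegrable
    intro y hy
    rcases Set.mem_uIcc.mp hy with h | h
    · exact le_trans ha h.1
    · exact le_trans hb h.1
  refine ⟨M' + 2*M'*K/ε + 1, ?_⟩
  intro T hT t ht
  have hdiv : 0 ≤ 2*M'*K/ε := by positivity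
  have hT' : M' < T := by linarith
  have ht0 : 0 < t := ht.1
  have htT : t ≤ T := ht.2
  have hTt0 : 0 ≤ T - t := by linarith
  rcases le_or_gt M' (T - t) with hcase | hcase
  · -- whole interval in [M', ∞)
    have h1 := key (T - t) T hTt0 (by linarith) (ψ - ε/2)
      (fun s hs => le_of_lt (hM s (le_trans (le_max_left _ _) (le_trans hcase hs.1))))
    have h2 : (1/t) * ((T - (T - t)) * (ψ - ε/2)) ≤ (1/t) * ∫ s in (T - t)..T, f s :=
      mul_le_mul_of_nonneg_left h1 (by positivity)
    have h3 : (1/t) * ((T - (T - t)) * (ψ - ε/2)) = ψ - ε/2 := by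
      field_simp
      ring
    linarith
  · -- split at M'
    have hi1 := hintOn (T - t) M' hTt0 hM'0
    have hi2 := hintOn M' T hM'0 (by linarith)
    have hsplit : (∫ s in (T - t)..M', f s) + ∫ s in M'..T, f s
        = ∫ s in (T - t)..T, f s :=
      intervalIntegral.integral_add_adjacent_intervals hi1 hi2
    have hb1 := key (T - t) M' hTt0 (le_of_lt hcase) L (fun s hs => hfL s (le_trans hTt0 hs.1))
    have hb2 := key M' T hM'0 (le_of_lt hT') (ψ - ε/2)
      (fun s hs => le_of_lt (hM s (le_trans (le_max_left _ _) hs.1)))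
    have hS : (M' - (T - t)) * L + (T - M') * (ψ - ε/2) ≤ ∫ s in (T - t)..T, f s := by
      rw [← hsplit]; linarith
    have hgoal : t * (ψ - ε) ≤ (M' - (T - t)) * L + (T - M') * (ψ - ε/2) := by
      have hb : 2*M'*K/ε + 1 ≤ T - M' := by linarith
      have heq : (2*M'*K/ε) * ε = 2*M'*K := by field_simp
      have ha1 : 0 ≤ M' - (T - t) := by linarith
      have ha2 : M' - (T - t) ≤ M' := by linarith
      nlinarith [mul_le_mul_of_nonneg_right hb hε.le,
        mul_le_mul_of_nonneg_right ha2 hK0,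
        mul_nonneg ha1 hε.le]
    have h2 : (1/t) * (t * (ψ - ε)) ≤ (1/t) * ∫ s in (T - t)..T, f s :=
      mul_le_mul_of_nonneg_left (le_trans hgoal hS) (by positivity)
    have h3 : (1/t) * (t * (ψ - ε)) = ψ - ε := by field_simp
    linarith
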